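/- Let S = diag(s₁,s₂,s₃) with s₁ ≥ s₂ ≥ |s₃| ≥ 0, and let dᵢ(S) be the diagonal entries of the first moment of the matrix Fisher distribution M(S). Then for any pair of distinct indices i, j ∈ {1,2,3}: dᵢ(S) + dⱼ(S) ≥ 0, and sᵢ + sⱼ = 0 if and only if dᵢ(S) + dⱼ(S) = 0. -/

import Mathlib

open MeasureTheory Matrix

noncomputable section

/-- The space of real `3 × 3` matrices. -/
abbrev M3 := Matrix (Fin 3) (Fin 3) ℝ

instance : MeasurableSpace M3 := (inferInstance : MeasurableSpace (Fin 3 → Fin 3 → ℝ))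

/-- The special orthogonal group `SO(3)`: real `3 × 3` matrices `R` with
`Rᵀ R = 1` and `det R = 1`. -/
def SO3 : Set M3 := {R | Rᵀ * R = 1 ∧ R.det = 1}

/-- `μ` is the Haar probability measure of the compact group `SO(3)`, viewed as a measure
on the ambient space of `3 × 3` matrices: it is a probability measure carried by `SO3`
which is invariant under left and right translation by elements of `SO3`. -/
structure IsHaarSO3 (μ : Measure M3) : Prop where
  prob : IsProbabilityMeasure μ
  carried : μ SO3ᶜ = 0
  map_left : ∀ U ∈ SO3, Measure.map (fun R => U * R) μ = μ
  map_right : ∀ V ∈ SO3, Measure.map (fun R => R * V) μ = μ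

/-- The normalizing constant `c(S)` of the matrix Fisher distribution with diagonal
parameter `S = diag s`. -/
def cS (μ : Measure M3) (s : Fin 3 → ℝ) : ℝ :=
  ∫ Q, Real.exp ((Matrix.diagonal s * Q).trace) ∂μ

/-- The matrix Fisher density `p_S(Q) = exp(tr(S Q)) / c(S)` with diagonal parameter
`S = diag s`. -/
def pS (μ : Measure M3) (s : Fin 3 → ℝ) (Q : M3) : ℝ :=
  Real.exp ((Matrix.diagonal s * Q).trace) / cS μ s

/-- `dᵢ(S)`: the `i`-th diagonal entry of the first moment `E[Q]` of the matrix Fisher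
distribution `M(S)` with `S = diag s`. -/
def dS (μ : Measure M3) (s : Fin 3 → ℝ) (i : Fin 3) : ℝ :=
  ∫ Q, Q i i * pS μ s Q ∂μ

instance : BorelSpace M3 := Pi.borelSpace

lemma sum3 {α : Type*} [AddCommMonoid α] (f : Fin 3 → α) {i j k : Fin 3}
    (hij : i ≠ j) (hik : i ≠ k) (hjk : j ≠ k) :
    ∑ a, f a = f i + f j + f k := by
  fin_cases i <;> fin_cases j <;> fin_cases k <;> simp_all [Fin.sum_univ_three] <;> abel

lemma trace_diag (s : Fin 3 → ℝ) (Q : M3) :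
    (Matrix.diagonal s * Q).trace = ∑ a, s a * Q a a := by
  simp [Matrix.trace, Matrix.diag, Matrix.diagonal_mul]

lemma SO3.one_mem : (1 : M3) ∈ SO3 := by constructor <;> simp [SO3]

lemma SO3.mul_mem {A B : M3} (hA : A ∈ SO3) (hB : B ∈ SO3) : A * B ∈ SO3 := by
  constructor
  · have h : (A * B)ᵀ * (A * B) = Bᵀ * (Aᵀ * A) * B := by
      rw [Matrix.transpose_mul]; noncomm_ring
    rw [h, hA.1, Matrix.mul_one, hB.1]
  · rw [Matrix.det_mul, hA.2, hB.2, one_mul]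

lemma SO3.transpose_mem {P : M3} (hP : P ∈ SO3) : Pᵀ ∈ SO3 :=
  ⟨by rw [Matrix.transpose_transpose]; exact mul_eq_one_comm.mp hP.1,
   by rw [Matrix.det_transpose]; exact hP.2⟩

lemma SO3.entry_le {Q : M3} (hQ : Q ∈ SO3) (a b : Fin 3) : |Q a b| ≤ 1 := by
  have h : (Qᵀ * Q) b b = (1 : M3) b b := by rw [hQ.1]
  have h1 : ∑ c, Q c b * Q c b = 1 := by
    simpa [Matrix.mul_apply, Matrix.transpose_apply, Matrix.one_apply] using h
  have h2 : Q a b * Q a b ≤ ∑ c, Q c b * Q c b :=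
    Finset.single_le_sum (fun c _ => mul_self_nonneg (Q c b)) (Finset.mem_univ a)
  rw [h1] at h2
  exact abs_le_one_iff_mul_self_le_one.mpr h2

lemma isClosed_SO3 : IsClosed SO3 := by
  have : SO3 = {R : M3 | Rᵀ * R = 1} ∩ {R : M3 | R.det = 1} := rfl
  rw [this]
  exact IsClosed.inter
    (isClosed_eq ((continuous_id.matrix_transpose).matrix_mul continuous_id) continuous_const)
    (isClosed_eq continuous_id.matrix_det continuous_const)

lemma isCompact_SO3 : IsCompact SO3 := by
  have hsub : SO3 ⊆ (Set.univ : Set (Fin 3)).pi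
      (fun _ => (Set.univ : Set (Fin 3)).pi fun _ => Set.Icc (-1 : ℝ) 1) := by
    intro Q hQ
    refine Set.mem_pi.mpr ?_
    intro a _
    rw [Set.mem_pi]
    intro b _
    exact abs_le.mp (SO3.entry_le hQ a b)
  exact IsCompact.of_isClosed_subset
    (isCompact_univ_pi fun _ => isCompact_univ_pi fun _ => isCompact_Icc) isClosed_SO3 hsub

lemma ae_SO3 {μ : Measure M3} (hμ : IsHaarSO3 μ) : ∀ᵐ Q ∂μ, Q ∈ SO3 := by
  rw [ae_iff]
  simpa [Set.compl_def] using hμ.carried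

lemma integrable_of_so3_bound {μ : Measure M3} (hμ : IsHaarSO3 μ) {f : M3 → ℝ}
    (hf : Continuous f) {C : ℝ} (hb : ∀ Q ∈ SO3, |f Q| ≤ C) : Integrable f μ := by
  haveI := hμ.prob
  refine Integrable.mono' (integrable_const C) hf.aestronglyMeasurable ?_
  filter_upwards [ae_SO3 hμ] with Q hQ
  simpa using hb Q hQ

lemma integral_left_inv {μ : Measure M3} (hμ : IsHaarSO3 μ) {U : M3} (hU : U ∈ SO3)
    (f : M3 → ℝ) (hf : Continuous f) : ∫ Q, f (U * Q) ∂μ = ∫ Q, f Q ∂μ := by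
  conv_rhs => rw [← hμ.map_left U hU]
  rw [integral_map ((by fun_prop : Continuous fun R : M3 => U * R)).measurable.aemeasurable
    hf.aestronglyMeasurable]

lemma integral_right_inv {μ : Measure M3} (hμ : IsHaarSO3 μ) {V : M3} (hV : V ∈ SO3)
    (f : M3 → ℝ) (hf : Continuous f) : ∫ Q, f (Q * V) ∂μ = ∫ Q, f Q ∂μ := by
  conv_rhs => rw [← hμ.map_right V hV]
  rw [integral_map ((by fun_prop : Continuous fun R : M3 => R * V)).measurable.aemeasurable
    hf.aestronglyMeasurable]

lemma integral_conj_inv {μ : Measure M3} (hμ : IsHaarSO3 μ) {P : M3} (hP : P ∈ SO3)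
    (f : M3 → ℝ) (hf : Continuous f) : ∫ Q, f (P * Q * Pᵀ) ∂μ = ∫ Q, f Q ∂μ := by
  have h1 : ∫ Q, f (P * Q * Pᵀ) ∂μ = ∫ Q, f (Q * Pᵀ) ∂μ :=
    integral_left_inv hμ hP (fun R => f (R * Pᵀ))
      (hf.comp (by fun_prop : Continuous fun R : M3 => R * Pᵀ))
  rw [h1, integral_right_inv hμ (SO3.transpose_mem hP) f hf]

lemma measure_SO3 {μ : Measure M3} (hμ : IsHaarSO3 μ) : μ SO3 = 1 := by
  haveI := hμ.prob
  have h := measure_add_measure_compl (μ := μ) isClosed_SO3.measurableSet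
  rw [hμ.carried, add_zero, measure_univ] at h
  exact h

lemma pos_of_open {μ : Measure M3} (hμ : IsHaarSO3 μ) {V : Set M3} (hV : IsOpen V)
    (h1 : (1 : M3) ∈ V) : 0 < μ V := by
  haveI := hμ.prob
  rcases (zero_le : (0:ENNReal) ≤ μ V).lt_or_eq with h | h
  · exact h
  exfalso
  have himg : ∀ R : M3, R ∈ SO3 → (fun Q => R * Q) '' V = (fun Q => Rᵀ * Q) ⁻¹' V := by
    intro R hR
    have hRRt : R * Rᵀ = 1 := mul_eq_one_comm.mp hR.1
    ext Q
    constructor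
    · rintro ⟨v, hv, rfl⟩
      show Rᵀ * ((fun Q => R * Q) v) ∈ V
      simpa [← Matrix.mul_assoc, hR.1] using hv
    · intro hQ
      refine ⟨Rᵀ * Q, hQ, ?_⟩
      show R * (Rᵀ * Q) = Q
      rw [← Matrix.mul_assoc, hRRt, Matrix.one_mul]
  have hmeas : ∀ R : M3, R ∈ SO3 → μ ((fun Q => R * Q) '' V) = μ V := by
    intro R hR
    rw [himg R hR,
      ← Measure.map_apply ((by fun_prop : Continuous fun Q : M3 => Rᵀ * Q)).measurable
        hV.measurableSet,
      hμ.map_left Rᵀ (SO3.transpose_mem hR)]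
  have hcov : SO3 ⊆ ⋃ R : SO3, (fun Q => (R : M3) * Q) '' V := by
    intro R hR
    refine Set.mem_iUnion.mpr ⟨⟨R, hR⟩, ⟨1, h1, ?_⟩⟩
    show R * 1 = R
    rw [Matrix.mul_one]
  have hopen : ∀ R : SO3, IsOpen ((fun Q => (R : M3) * Q) '' V) := by
    intro R
    rw [himg R R.2]
    exact hV.preimage (by fun_prop : Continuous fun Q : M3 => (R : M3)ᵀ * Q)
  obtain ⟨t, ht⟩ := isCompact_SO3.elim_finite_subcover
    (fun R : SO3 => (fun Q => (R : M3) * Q) '' V) hopen hcov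
  have hle : μ SO3 ≤ ∑ R ∈ t, μ ((fun Q => (R : M3) * Q) '' V) :=
    le_trans (measure_mono ht) (measure_biUnion_finset_le t _)
  rw [measure_SO3 hμ] at hle
  have : ∑ R ∈ t, μ ((fun Q => (R : M3) * Q) '' V) = 0 := by
    apply Finset.sum_eq_zero
    intro R _
    rw [hmeas R R.2, ← h]
  rw [this] at hle
  simp at hle

lemma exp_comb_nonneg {x y : ℝ} (h : 0 ≤ x + y) :
    0 ≤ Real.exp x - Real.exp (-x) + (Real.exp y - Real.exp (-y)) := by
  have h1 : Real.exp (-y) ≤ Real.exp x := Real.exp_le_exp.2 (by linarith)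
  have h2 : Real.exp (-x) ≤ Real.exp y := Real.exp_le_exp.2 (by linarith)
  linarith

lemma mul_abs_le {c q : ℝ} (hq : |q| ≤ 1) : c * q ≤ |c| := by
  calc c * q ≤ |c * q| := le_abs_self _
  _ = |c| * |q| := abs_mul _ _
  _ ≤ |c| * 1 := mul_le_mul_of_nonneg_left hq (abs_nonneg c)
  _ = |c| := mul_one _

lemma key (μ : Measure M3) (hμ : IsHaarSO3 μ) (s : Fin 3 → ℝ) (i j k : Fin 3)
    (hij : i ≠ j) (hik : i ≠ k) (hjk : j ≠ k)
    (U P : M3) (hU : U ∈ SO3) (hP : P ∈ SO3)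
    (hUd : ∀ (Q : M3) (a : Fin 3), (U * Q) a a = if a = k then Q a a else -(Q a a))
    (hPi : ∀ Q : M3, (P * Q * Pᵀ) i i = Q j j)
    (hPj : ∀ Q : M3, (P * Q * Pᵀ) j j = Q i i)
    (hPk : ∀ Q : M3, (P * Q * Pᵀ) k k = Q k k)
    (hs : 0 ≤ s i + s j) :
    0 ≤ dS μ s i + dS μ s j ∧ (s i + s j = 0 ↔ dS μ s i + dS μ s j = 0) := by
  haveI := hμ.prob
  have htr : ∀ Q : M3, (Matrix.diagonal s * Q).trace
      = s i * Q i i + s j * Q j j + s k * Q k k := fun Q => by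
    rw [trace_diag]; exact sum3 _ hij hik hjk
  set C : ℝ := Real.exp (|s i| + |s j| + |s k|) with hC
  have hEcont : Continuous fun Q : M3 => Real.exp ((Matrix.diagonal s * Q).trace) :=
    Real.continuous_exp.comp ((continuous_const.matrix_mul continuous_id).matrix_trace)
  have hEb : ∀ Q ∈ SO3, |Real.exp ((Matrix.diagonal s * Q).trace)| ≤ C := by
    intro Q hQ
    rw [abs_of_pos (Real.exp_pos _), hC]
    apply Real.exp_le_exp.2
    rw [htr]
    have bi := mul_abs_le (SO3.entry_le hQ i i) (c := s i)
    have bj := mul_abs_le (SO3.entry_le hQ j j) (c := s j)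
    have bk := mul_abs_le (SO3.entry_le hQ k k) (c := s k)
    linarith
  set F : M3 → ℝ := fun Q =>
    (Q i i + Q j j) * Real.exp ((Matrix.diagonal s * Q).trace) with hF
  have hFcont : Continuous F :=
    ((by fun_prop : Continuous fun Q : M3 => Q i i + Q j j)).mul hEcont
  have hFb : ∀ Q ∈ SO3, |F Q| ≤ 2 * C := by
    intro Q hQ
    have bi := abs_le.mp (SO3.entry_le hQ i i)
    have bj := abs_le.mp (SO3.entry_le hQ j j)
    have ht : |Q i i + Q j j| ≤ 2 := by rw [abs_le]; constructor <;> linarith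
    calc |F Q| = |Q i i + Q j j| * |Real.exp ((Matrix.diagonal s * Q).trace)| := abs_mul _ _
    _ ≤ 2 * C := mul_le_mul ht (hEb Q hQ) (abs_nonneg _) (by norm_num)
  have hT2cont : Continuous fun Q : M3 => F (U * Q) := hFcont.comp (by fun_prop)
  have hT3cont : Continuous fun Q : M3 => F (P * Q * Pᵀ) := hFcont.comp (by fun_prop)
  have hT4cont : Continuous fun Q : M3 => F (U * (P * Q * Pᵀ)) := hFcont.comp (by fun_prop)
  have hFint : Integrable F μ := integrable_of_so3_bound hμ hFcont hFb
  have hF2int : Integrable (fun Q => F (U * Q)) μ :=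
    integrable_of_so3_bound hμ hT2cont (fun Q hQ => hFb _ (SO3.mul_mem hU hQ))
  have hF3int : Integrable (fun Q => F (P * Q * Pᵀ)) μ :=
    integrable_of_so3_bound hμ hT3cont
      (fun Q hQ => hFb _ (SO3.mul_mem (SO3.mul_mem hP hQ) (SO3.transpose_mem hP)))
  have hF4int : Integrable (fun Q => F (U * (P * Q * Pᵀ))) μ :=
    integrable_of_so3_bound hμ hT4cont
      (fun Q hQ => hFb _ (SO3.mul_mem hU (SO3.mul_mem (SO3.mul_mem hP hQ) (SO3.transpose_mem hP))))
  have e2 : ∫ Q, F (U * Q) ∂μ = ∫ Q, F Q ∂μ := integral_left_inv hμ hU F hFcont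
  have e3 : ∫ Q, F (P * Q * Pᵀ) ∂μ = ∫ Q, F Q ∂μ := integral_conj_inv hμ hP F hFcont
  have e4 : ∫ Q, F (U * (P * Q * Pᵀ)) ∂μ = ∫ Q, F Q ∂μ :=
    (integral_conj_inv hμ hP (fun R => F (U * R))
      (hFcont.comp (by fun_prop : Continuous fun R : M3 => U * R))).trans e2
  have hI12 : Integrable (fun Q => F Q + F (U * Q)) μ := hFint.add hF2int
  have hI123 : Integrable (fun Q => F Q + F (U * Q) + F (P * Q * Pᵀ)) μ := hI12.add hF3int
  have hsum : ∫ Q, (F Q + F (U * Q) + F (P * Q * Pᵀ) + F (U * (P * Q * Pᵀ))) ∂μ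
      = 4 * ∫ Q, F Q ∂μ := by
    have q1 : ∫ Q, (F Q + F (U * Q) + F (P * Q * Pᵀ) + F (U * (P * Q * Pᵀ))) ∂μ
        = (∫ Q, (F Q + F (U * Q) + F (P * Q * Pᵀ)) ∂μ)
          + ∫ Q, F (U * (P * Q * Pᵀ)) ∂μ := integral_add hI123 hF4int
    have q2 : ∫ Q, (F Q + F (U * Q) + F (P * Q * Pᵀ)) ∂μ
        = (∫ Q, (F Q + F (U * Q)) ∂μ) + ∫ Q, F (P * Q * Pᵀ) ∂μ := integral_add hI12 hF3int
    have q3 : ∫ Q, (F Q + F (U * Q)) ∂μ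
        = (∫ Q, F Q ∂μ) + ∫ Q, F (U * Q) ∂μ := integral_add hFint hF2int
    rw [q1, q2, q3, e2, e3, e4]
    ring
  set G : M3 → ℝ := fun Q =>
    (Q i i + Q j j) * Real.exp (s k * Q k k) *
      ((Real.exp (s i * Q i i + s j * Q j j) - Real.exp (-(s i * Q i i + s j * Q j j)))
       + (Real.exp (s i * Q j j + s j * Q i i) - Real.exp (-(s i * Q j j + s j * Q i i)))) with hG
  have hGeq : ∀ Q, F Q + F (U * Q) + F (P * Q * Pᵀ) + F (U * (P * Q * Pᵀ)) = G Q := by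
    intro Q
    have h2 : F (U * Q) = (-(Q i i) + -(Q j j)) *
        Real.exp (-(s i * Q i i + s j * Q j j) + s k * Q k k) := by
      simp only [hF]
      rw [htr (U * Q), hUd Q i, hUd Q j, hUd Q k, if_neg hik, if_neg hjk, if_pos rfl,
        show s i * -(Q i i) + s j * -(Q j j) + s k * Q k k
          = -(s i * Q i i + s j * Q j j) + s k * Q k k from by ring]
    have h3 : F (P * Q * Pᵀ) = (Q j j + Q i i) *
        Real.exp (s i * Q j j + s j * Q i i + s k * Q k k) := by
      simp only [hF]
      rw [htr (P * Q * Pᵀ), hPi Q, hPj Q, hPk Q]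
    have h4 : F (U * (P * Q * Pᵀ)) = (-(Q j j) + -(Q i i)) *
        Real.exp (-(s i * Q j j + s j * Q i i) + s k * Q k k) := by
      simp only [hF]
      rw [htr (U * (P * Q * Pᵀ)), hUd _ i, hUd _ j, hUd _ k,
        if_neg hik, if_neg hjk, if_pos rfl, hPi Q, hPj Q, hPk Q,
        show s i * -(Q j j) + s j * -(Q i i) + s k * Q k k
          = -(s i * Q j j + s j * Q i i) + s k * Q k k from by ring]
    rw [h2, h3, h4]
    simp only [hF, hG]
    rw [htr Q]
    simp only [Real.exp_add, Real.exp_neg]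
    ring
  have hGnn : ∀ Q, 0 ≤ G Q := by
    intro Q
    simp only [hG]
    have h1 : (s i * Q i i + s j * Q j j) + (s i * Q j j + s j * Q i i)
        = (s i + s j) * (Q i i + Q j j) := by ring
    rcases le_total 0 (Q i i + Q j j) with ht | ht
    · exact mul_nonneg (mul_nonneg ht (Real.exp_pos _).le)
        (exp_comb_nonneg (by nlinarith [mul_nonneg hs ht]))
    · have hX := exp_comb_nonneg (x := -(s i * Q i i + s j * Q j j))
        (y := -(s i * Q j j + s j * Q i i)) (by nlinarith [mul_nonneg hs (neg_nonneg.2 ht)])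
      rw [neg_neg, neg_neg] at hX
      have hXle : (Real.exp (s i * Q i i + s j * Q j j)
          - Real.exp (-(s i * Q i i + s j * Q j j)))
          + (Real.exp (s i * Q j j + s j * Q i i)
          - Real.exp (-(s i * Q j j + s j * Q i i))) ≤ 0 := by linarith
      nlinarith [Real.exp_pos (s k * Q k k), mul_nonneg (neg_nonneg.2 ht) (neg_nonneg.2 hXle)]
  have hGcont : Continuous G := by
    have hGfun : G = fun Q => F Q + F (U * Q) + F (P * Q * Pᵀ) + F (U * (P * Q * Pᵀ)) :=
      funext fun Q => (hGeq Q).symm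
    rw [hGfun]
    exact ((hFcont.add hT2cont).add hT3cont).add hT4cont
  have hGint : Integrable G μ := by
    have hGfun : G = fun Q => F Q + F (U * Q) + F (P * Q * Pᵀ) + F (U * (P * Q * Pᵀ)) :=
      funext fun Q => (hGeq Q).symm
    rw [hGfun]
    exact ((hFint.add hF2int).add hF3int).add hF4int
  have hGI : ∫ Q, G Q ∂μ = 4 * ∫ Q, F Q ∂μ := by
    rw [← hsum]
    exact integral_congr_ae (Filter.Eventually.of_forall fun Q => (hGeq Q).symm)
  have hEint : Integrable (fun Q => Real.exp ((Matrix.diagonal s * Q).trace)) μ :=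
    integrable_of_so3_bound hμ hEcont hEb
  have hc : 0 < cS μ s := by
    rw [cS, integral_pos_iff_support_of_nonneg (fun Q => (Real.exp_pos _).le) hEint]
    have hsupp : Function.support (fun Q : M3 =>
        Real.exp ((Matrix.diagonal s * Q).trace)) = Set.univ := by
      ext Q; simp [Function.mem_support, (Real.exp_pos _).ne']
    rw [hsupp, measure_univ]; norm_num
  have hQiEint : ∀ a : Fin 3,
      Integrable (fun Q : M3 => Q a a * Real.exp ((Matrix.diagonal s * Q).trace)) μ := by
    intro a
    refine integrable_of_so3_bound (C := C) hμ
      ((by fun_prop : Continuous fun Q : M3 => Q a a).mul hEcont) ?_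
    intro Q hQ
    calc |Q a a * Real.exp ((Matrix.diagonal s * Q).trace)|
        = |Q a a| * |Real.exp ((Matrix.diagonal s * Q).trace)| := abs_mul _ _
    _ ≤ 1 * C := mul_le_mul (SO3.entry_le hQ a a) (hEb Q hQ) (abs_nonneg _) zero_le_one
    _ = C := one_mul C
  have hdS : ∀ a : Fin 3, dS μ s a
      = (∫ Q, Q a a * Real.exp ((Matrix.diagonal s * Q).trace) ∂μ) / cS μ s := by
    intro a
    rw [dS]
    have hps : ∀ Q : M3, Q a a * pS μ s Q
        = (Q a a * Real.exp ((Matrix.diagonal s * Q).trace)) / cS μ s := by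
      intro Q; rw [pS]; ring
    simp only [hps]
    rw [integral_div]
  have hdsum : dS μ s i + dS μ s j = (∫ Q, F Q ∂μ) / cS μ s := by
    rw [hdS i, hdS j, ← add_div]
    congr 1
    rw [← integral_add (hQiEint i) (hQiEint j)]
    refine integral_congr_ae (Filter.Eventually.of_forall fun Q => ?_)
    simp only [hF]
    ring
  have hInn : 0 ≤ ∫ Q, F Q ∂μ := by
    have h0 : 0 ≤ ∫ Q, G Q ∂μ := integral_nonneg hGnn
    linarith [hGI]
  refine ⟨by rw [hdsum]; exact div_nonneg hInn hc.le, ?_, ?_⟩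
  · intro h0
    have hGzero : ∀ Q, G Q = 0 := by
      intro Q
      simp only [hG]
      have hsj : s j = -(s i) := by linarith
      rw [show s i * Q j j + s j * Q i i = -(s i * Q i i + s j * Q j j) from by
        rw [hsj]; ring, neg_neg]
      ring
    have hGZ : ∫ Q, G Q ∂μ = 0 := by simp [hGzero]
    have hFZ : ∫ Q, F Q ∂μ = 0 := by linarith [hGI]
    rw [hdsum, hFZ, zero_div]
  · intro h0
    by_contra hne
    have hpos : 0 < s i + s j := lt_of_le_of_ne hs (Ne.symm hne)
    have hIF : ∫ Q, F Q ∂μ = 0 := by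
      rw [hdsum] at h0
      rcases div_eq_zero_iff.mp h0 with h | h
      · exact h
      · exact absurd h hc.ne'
    have hIG : ∫ Q, G Q ∂μ = 0 := by rw [hGI, hIF, mul_zero]
    have hae : ∀ᵐ Q ∂μ, G Q = 0 :=
      (integral_eq_zero_iff_of_nonneg hGnn hGint).mp hIG
    have hG1 : 0 < G 1 := by
      simp only [hG, Matrix.one_apply_eq, mul_one]
      have hlt : Real.exp (-(s i + s j)) < Real.exp (s i + s j) :=
        Real.exp_lt_exp.2 (by linarith)
      have he : (0:ℝ) < Real.exp (s k) := Real.exp_pos _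
      nlinarith
    have hopen : IsOpen {Q : M3 | 0 < G Q} := isOpen_lt continuous_const hGcont
    have hVpos : 0 < μ {Q : M3 | 0 < G Q} := pos_of_open hμ hopen hG1
    have hsub : {Q : M3 | 0 < G Q} ⊆ {Q : M3 | ¬ G Q = 0} := fun Q hQ => hQ.ne'
    have : μ {Q : M3 | ¬ G Q = 0} = 0 := ae_iff.mp hae
    have hle : μ {Q : M3 | 0 < G Q} ≤ μ {Q : M3 | ¬ G Q = 0} := measure_mono hsub
    rw [this] at hle
    exact absurd (le_antisymm hle zero_le) hVpos.ne'


set_option maxHeartbeats 1000000 in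
/-- For `S = diag (s₁,s₂,s₃)` with `s₁ ≥ s₂ ≥ |s₃| ≥ 0` and distinct indices `i ≠ j`:
`dᵢ(S) + dⱼ(S) ≥ 0`, and `sᵢ + sⱼ = 0` iff `dᵢ(S) + dⱼ(S) = 0`. -/
theorem d_sum_nonneg_and_vanishing_iff (μ : Measure M3) (hμ : IsHaarSO3 μ)
    (s : Fin 3 → ℝ) (h1 : s 1 ≤ s 0) (h2 : |s 2| ≤ s 1)
    (i j : Fin 3) (hij : i ≠ j) :
    0 ≤ dS μ s i + dS μ s j ∧ (s i + s j = 0 ↔ dS μ s i + dS μ s j = 0) := by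
  have h2' := abs_le.mp h2

  have hUa : (!![(-1:ℝ),0,0;0,-1,0;0,0,1]) ∈ SO3 := by
    have hT : (!![(-1:ℝ),0,0;0,-1,0;0,0,1])ᵀ = !![(-1:ℝ),0,0;0,-1,0;0,0,1] := by
      ext a b; fin_cases a <;> fin_cases b <;> simp [Matrix.mul_apply, Fin.sum_univ_three, Matrix.one_apply, Matrix.vecHead, Matrix.vecTail, Matrix.vecMul, dotProduct, Function.comp, Matrix.transpose_apply]
    refine ⟨?_, by simp [Matrix.det_fin_three]⟩
    rw [hT]; ext a b; fin_cases a <;> fin_cases b <;> simp [Matrix.mul_apply, Fin.sum_univ_three, Matrix.one_apply, Matrix.vecHead, Matrix.vecTail, Matrix.vecMul, dotProduct, Function.comp, Matrix.transpose_apply]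
  have hPa : (!![(0:ℝ),1,0;1,0,0;0,0,-1]) ∈ SO3 := by
    have hT : (!![(0:ℝ),1,0;1,0,0;0,0,-1])ᵀ = !![(0:ℝ),1,0;1,0,0;0,0,-1] := by
      ext a b; fin_cases a <;> fin_cases b <;> simp [Matrix.mul_apply, Fin.sum_univ_three, Matrix.one_apply, Matrix.vecHead, Matrix.vecTail, Matrix.vecMul, dotProduct, Function.comp, Matrix.transpose_apply]
    refine ⟨?_, by simp [Matrix.det_fin_three]⟩
    rw [hT]; ext a b; fin_cases a <;> fin_cases b <;> simp [Matrix.mul_apply, Fin.sum_univ_three, Matrix.one_apply, Matrix.vecHead, Matrix.vecTail, Matrix.vecMul, dotProduct, Function.comp, Matrix.transpose_apply]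
  have hUda : ∀ (Q : M3) (a : Fin 3),
      ((!![(-1:ℝ),0,0;0,-1,0;0,0,1]) * Q) a a = if a = (2 : Fin 3) then Q a a else -(Q a a) := by
    intro Q a; fin_cases a <;> simp [Matrix.mul_apply, Fin.sum_univ_three, Matrix.one_apply, Matrix.vecHead, Matrix.vecTail, Matrix.vecMul, dotProduct, Function.comp, Matrix.transpose_apply]
  have hPca : ∀ Q : M3, ((!![(0:ℝ),1,0;1,0,0;0,0,-1]) * Q * (!![(0:ℝ),1,0;1,0,0;0,0,-1])ᵀ) 0 0 = Q 1 1
      ∧ ((!![(0:ℝ),1,0;1,0,0;0,0,-1]) * Q * (!![(0:ℝ),1,0;1,0,0;0,0,-1])ᵀ) 1 1 = Q 0 0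
      ∧ ((!![(0:ℝ),1,0;1,0,0;0,0,-1]) * Q * (!![(0:ℝ),1,0;1,0,0;0,0,-1])ᵀ) 2 2 = Q 2 2 := by
    have hT : (!![(0:ℝ),1,0;1,0,0;0,0,-1])ᵀ = !![(0:ℝ),1,0;1,0,0;0,0,-1] := by
      ext a b; fin_cases a <;> fin_cases b <;> simp [Matrix.mul_apply, Fin.sum_univ_three, Matrix.one_apply, Matrix.vecHead, Matrix.vecTail, Matrix.vecMul, dotProduct, Function.comp, Matrix.transpose_apply]
    intro Q; rw [hT]
    refine ⟨?_, ?_, ?_⟩ <;> simp [Matrix.mul_apply, Fin.sum_univ_three, Matrix.one_apply, Matrix.vecHead, Matrix.vecTail, Matrix.vecMul, dotProduct, Function.comp, Matrix.transpose_apply]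

  have hUb : (!![(-1:ℝ),0,0;0,1,0;0,0,-1]) ∈ SO3 := by
    have hT : (!![(-1:ℝ),0,0;0,1,0;0,0,-1])ᵀ = !![(-1:ℝ),0,0;0,1,0;0,0,-1] := by
      ext a b; fin_cases a <;> fin_cases b <;> simp [Matrix.mul_apply, Fin.sum_univ_three, Matrix.one_apply, Matrix.vecHead, Matrix.vecTail, Matrix.vecMul, dotProduct, Function.comp, Matrix.transpose_apply]
    refine ⟨?_, by simp [Matrix.det_fin_three]⟩
    rw [hT]; ext a b; fin_cases a <;> fin_cases b <;> simp [Matrix.mul_apply, Fin.sum_univ_three, Matrix.one_apply, Matrix.vecHead, Matrix.vecTail, Matrix.vecMul, dotProduct, Function.comp, Matrix.transpose_apply]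
  have hPb : (!![(0:ℝ),0,1;0,-1,0;1,0,0]) ∈ SO3 := by
    have hT : (!![(0:ℝ),0,1;0,-1,0;1,0,0])ᵀ = !![(0:ℝ),0,1;0,-1,0;1,0,0] := by
      ext a b; fin_cases a <;> fin_cases b <;> simp [Matrix.mul_apply, Fin.sum_univ_three, Matrix.one_apply, Matrix.vecHead, Matrix.vecTail, Matrix.vecMul, dotProduct, Function.comp, Matrix.transpose_apply]
    refine ⟨?_, by simp [Matrix.det_fin_three]⟩
    rw [hT]; ext a b; fin_cases a <;> fin_cases b <;> simp [Matrix.mul_apply, Fin.sum_univ_three, Matrix.one_apply, Matrix.vecHead, Matrix.vecTail, Matrix.vecMul, dotProduct, Function.comp, Matrix.transpose_apply]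
  have hUdb : ∀ (Q : M3) (a : Fin 3),
      ((!![(-1:ℝ),0,0;0,1,0;0,0,-1]) * Q) a a = if a = (1 : Fin 3) then Q a a else -(Q a a) := by
    intro Q a; fin_cases a <;> simp [Matrix.mul_apply, Fin.sum_univ_three, Matrix.one_apply, Matrix.vecHead, Matrix.vecTail, Matrix.vecMul, dotProduct, Function.comp, Matrix.transpose_apply]
  have hPcb : ∀ Q : M3, ((!![(0:ℝ),0,1;0,-1,0;1,0,0]) * Q * (!![(0:ℝ),0,1;0,-1,0;1,0,0])ᵀ) 0 0 = Q 2 2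
      ∧ ((!![(0:ℝ),0,1;0,-1,0;1,0,0]) * Q * (!![(0:ℝ),0,1;0,-1,0;1,0,0])ᵀ) 2 2 = Q 0 0
      ∧ ((!![(0:ℝ),0,1;0,-1,0;1,0,0]) * Q * (!![(0:ℝ),0,1;0,-1,0;1,0,0])ᵀ) 1 1 = Q 1 1 := by
    have hT : (!![(0:ℝ),0,1;0,-1,0;1,0,0])ᵀ = !![(0:ℝ),0,1;0,-1,0;1,0,0] := by
      ext a b; fin_cases a <;> fin_cases b <;> simp [Matrix.mul_apply, Fin.sum_univ_three, Matrix.one_apply, Matrix.vecHead, Matrix.vecTail, Matrix.vecMul, dotProduct, Function.comp, Matrix.transpose_apply]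
    intro Q; rw [hT]
    refine ⟨?_, ?_, ?_⟩ <;> simp [Matrix.mul_apply, Fin.sum_univ_three, Matrix.one_apply, Matrix.vecHead, Matrix.vecTail, Matrix.vecMul, dotProduct, Function.comp, Matrix.transpose_apply]

  have hUc : (!![(1:ℝ),0,0;0,-1,0;0,0,-1]) ∈ SO3 := by
    have hT : (!![(1:ℝ),0,0;0,-1,0;0,0,-1])ᵀ = !![(1:ℝ),0,0;0,-1,0;0,0,-1] := by
      ext a b; fin_cases a <;> fin_cases b <;> simp [Matrix.mul_apply, Fin.sum_univ_three, Matrix.one_apply, Matrix.vecHead, Matrix.vecTail, Matrix.vecMul, dotProduct, Function.comp, Matrix.transpose_apply]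
    refine ⟨?_, by simp [Matrix.det_fin_three]⟩
    rw [hT]; ext a b; fin_cases a <;> fin_cases b <;> simp [Matrix.mul_apply, Fin.sum_univ_three, Matrix.one_apply, Matrix.vecHead, Matrix.vecTail, Matrix.vecMul, dotProduct, Function.comp, Matrix.transpose_apply]
  have hPc : (!![(-1:ℝ),0,0;0,0,1;0,1,0]) ∈ SO3 := by
    have hT : (!![(-1:ℝ),0,0;0,0,1;0,1,0])ᵀ = !![(-1:ℝ),0,0;0,0,1;0,1,0] := by
      ext a b; fin_cases a <;> fin_cases b <;> simp [Matrix.mul_apply, Fin.sum_univ_three, Matrix.one_apply, Matrix.vecHead, Matrix.vecTail, Matrix.vecMul, dotProduct, Function.comp, Matrix.transpose_apply]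
    refine ⟨?_, by simp [Matrix.det_fin_three]⟩
    rw [hT]; ext a b; fin_cases a <;> fin_cases b <;> simp [Matrix.mul_apply, Fin.sum_univ_three, Matrix.one_apply, Matrix.vecHead, Matrix.vecTail, Matrix.vecMul, dotProduct, Function.comp, Matrix.transpose_apply]
  have hUdc : ∀ (Q : M3) (a : Fin 3),
      ((!![(1:ℝ),0,0;0,-1,0;0,0,-1]) * Q) a a = if a = (0 : Fin 3) then Q a a else -(Q a a) := by
    intro Q a; fin_cases a <;> simp [Matrix.mul_apply, Fin.sum_univ_three, Matrix.one_apply, Matrix.vecHead, Matrix.vecTail, Matrix.vecMul, dotProduct, Function.comp, Matrix.transpose_apply]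
  have hPcc : ∀ Q : M3, ((!![(-1:ℝ),0,0;0,0,1;0,1,0]) * Q * (!![(-1:ℝ),0,0;0,0,1;0,1,0])ᵀ) 1 1 = Q 2 2
      ∧ ((!![(-1:ℝ),0,0;0,0,1;0,1,0]) * Q * (!![(-1:ℝ),0,0;0,0,1;0,1,0])ᵀ) 2 2 = Q 1 1
      ∧ ((!![(-1:ℝ),0,0;0,0,1;0,1,0]) * Q * (!![(-1:ℝ),0,0;0,0,1;0,1,0])ᵀ) 0 0 = Q 0 0 := by
    have hT : (!![(-1:ℝ),0,0;0,0,1;0,1,0])ᵀ = !![(-1:ℝ),0,0;0,0,1;0,1,0] := by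
      ext a b; fin_cases a <;> fin_cases b <;> simp [Matrix.mul_apply, Fin.sum_univ_three, Matrix.one_apply, Matrix.vecHead, Matrix.vecTail, Matrix.vecMul, dotProduct, Function.comp, Matrix.transpose_apply]
    intro Q; rw [hT]
    refine ⟨?_, ?_, ?_⟩ <;> simp [Matrix.mul_apply, Fin.sum_univ_three, Matrix.one_apply, Matrix.vecHead, Matrix.vecTail, Matrix.vecMul, dotProduct, Function.comp, Matrix.transpose_apply]
  fin_cases i <;> fin_cases j
  · exact absurd rfl hij
  · exact key μ hμ s 0 1 2 (by decide) (by decide) (by decide) _ _ hUa hPa hUda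
      (fun Q => (hPca Q).1) (fun Q => (hPca Q).2.1) (fun Q => (hPca Q).2.2) (by linarith)
  · exact key μ hμ s 0 2 1 (by decide) (by decide) (by decide) _ _ hUb hPb hUdb
      (fun Q => (hPcb Q).1) (fun Q => (hPcb Q).2.1) (fun Q => (hPcb Q).2.2) (by linarith)
  · exact key μ hμ s 1 0 2 (by decide) (by decide) (by decide) _ _ hUa hPa hUda
      (fun Q => (hPca Q).2.1) (fun Q => (hPca Q).1) (fun Q => (hPca Q).2.2) (by linarith)
  · exact absurd rfl hij
  · exact key μ hμ s 1 2 0 (by decide) (by decide) (by decide) _ _ hUc hPc hUdc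
      (fun Q => (hPcc Q).1) (fun Q => (hPcc Q).2.1) (fun Q => (hPcc Q).2.2) (by linarith)
  · exact key μ hμ s 2 0 1 (by decide) (by decide) (by decide) _ _ hUb hPb hUdb
      (fun Q => (hPcb Q).2.1) (fun Q => (hPcb Q).1) (fun Q => (hPcb Q).2.2) (by linarith)
  · exact key μ hμ s 2 1 0 (by decide) (by decide) (by decide) _ _ hUc hPc hUdc
      (fun Q => (hPcc Q).2.1) (fun Q => (hPcc Q).1) (fun Q => (hPcc Q).2.2) (by linarith)
  · exact absurd rfl hij
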